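/- arXiv:2101.10513 — 2 statements merged into one kernel-verified Lean document; each statement's English description precedes it below -/
import Mathlib

section
/- Let a > 0 and let c : ℤ×ℤ → ℝ be a function with c(m,n) ≥ 0 for all (m,n) and c(m,n) = 0 whenever |m+nτ′| > τ. Let k be a real number of the form k = (q−pτ′)/√5 with p, q ∈ ℤ and |(pτ−q)/√5| ≤ a. Suppose I ∈ ℝ and J ∈ ℂ are such that, as N → ∞ along the positive integers, (1/(2N))·Σ_{(m,n)∈ℤ²: |m+nτ| ≤ N, |m+nτ′| ≤ τ} c(m,n) → I and (1/(2N))·Σ_{(m,n)∈ℤ²: |m+nτ| ≤ N, |m+nτ′| ≤ τ} exp(−2πi(m+nτ)k)·c(m,n) → J (both sums are over finite index sets). Then |I − J| ≤ 2πaτ·I; in particular Re J ≥ (1 − 2πaτ)·I. -/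
noncomputable def tau : ℝ := (1 + Real.sqrt 5) / 2
noncomputable def tau' : ℝ := (1 - Real.sqrt 5) / 2

lemma exp_theta_sub_one (θ : ℝ) :
    ‖Complex.exp (θ * Complex.I) - 1‖ ≤ |θ| := by
  have h : Complex.exp (θ * Complex.I) - 1
      = Complex.ofReal (Real.cos θ - 1) + Complex.ofReal (Real.sin θ) * Complex.I := by
    rw [Complex.exp_mul_I]; push_cast; ring
  rw [h, Complex.norm_def, Complex.normSq_add_mul_I]
  rw [show |θ| = Real.sqrt (θ ^ 2) by rw [Real.sqrt_sq_eq_abs]]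
  apply Real.sqrt_le_sqrt
  have h1 : Real.cos (2 * (θ / 2)) = 2 * Real.cos (θ / 2) ^ 2 - 1 := Real.cos_two_mul _
  have h2 : Real.sin (θ / 2) ^ 2 + Real.cos (θ / 2) ^ 2 = 1 := Real.sin_sq_add_cos_sq _
  have h3 : Real.sin (θ / 2) ^ 2 ≤ (θ / 2) ^ 2 := Real.sin_sq_le_sq
  have h4 : Real.sin θ ^ 2 + Real.cos θ ^ 2 = 1 := Real.sin_sq_add_cos_sq _
  have h5 : 2 * (θ / 2) = θ := by ring
  rw [h5] at h1
  nlinarith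

lemma braggFin (N : ℕ) :
    {r : ℤ × ℤ | |(r.1 : ℝ) + r.2 * tau| ≤ N ∧ |(r.1 : ℝ) + r.2 * tau'| ≤ tau}.Finite := by
  have h5 : Real.sqrt 5 ^ 2 = 5 := Real.sq_sqrt (by norm_num)
  have h5nn : (0:ℝ) ≤ Real.sqrt 5 := Real.sqrt_nonneg 5
  have hs2 : (2:ℝ) ≤ Real.sqrt 5 := by nlinarith
  have hs3 : Real.sqrt 5 ≤ 3 := by nlinarith
  have htaupos : (0:ℝ) < tau := by unfold tau; nlinarith
  have htau2 : tau ≤ 2 := by unfold tau; nlinarith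
  apply Set.Finite.subset
    ((Set.finite_Icc (-(3*(N:ℤ)+9)) (3*(N:ℤ)+9)).prod (Set.finite_Icc (-((N:ℤ)+2)) ((N:ℤ)+2)))
  rintro ⟨m, n⟩ ⟨h1, h2⟩
  simp only at h1 h2
  rw [abs_le] at h1 h2
  obtain ⟨h1a, h1b⟩ := h1
  obtain ⟨h2a, h2b⟩ := h2
  have hns : (n:ℝ) * Real.sqrt 5 = ((m:ℝ) + n * tau) - ((m:ℝ) + n * tau') := by
    unfold tau tau'; ring
  have hnsu : (n:ℝ) * Real.sqrt 5 ≤ N + 2 := by rw [hns]; linarith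
  have hnsl : -((N:ℝ) + 2) ≤ (n:ℝ) * Real.sqrt 5 := by rw [hns]; linarith
  have hnu : (n:ℝ) ≤ N + 2 := by
    rcases le_or_gt (n:ℝ) 0 with h | h
    · linarith
    · nlinarith
  have hnl : -((N:ℝ) + 2) ≤ (n:ℝ) := by
    rcases le_or_gt 0 (n:ℝ) with h | h
    · linarith
    · nlinarith
  have hnt : |(n:ℝ) * tau| ≤ (N + 2) * 2 := by
    rw [abs_mul]
    exact mul_le_mul (abs_le.mpr ⟨hnl, hnu⟩)
      (by rw [abs_of_pos htaupos]; exact htau2) (abs_nonneg _) (by positivity)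
  rw [abs_le] at hnt
  constructor
  · simp only [Set.mem_Icc]
    refine ⟨?_, ?_⟩
    · have : -(3*(N:ℝ)+9) ≤ (m:ℝ) := by linarith
      exact_mod_cast this
    · have : (m:ℝ) ≤ 3*(N:ℝ)+9 := by linarith
      exact_mod_cast this
  · simp only [Set.mem_Icc]
    exact ⟨by exact_mod_cast hnl, by exact_mod_cast hnu⟩

/-- Bragg peak estimate for subsets of the Fibonacci model set: if the autocorrelation
coefficients `c` are nonnegative and supported in `⋀([−τ,τ])`, the averaged sums
converge to `I` (at `0`) and `J` (at `k ∈ ⋀⋆([−a,a])`), then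
`|I − J| ≤ 2πaτ·I`, and in particular `Re J ≥ (1 − 2πaτ)·I`. -/
theorem bragg_peak_estimate_fibonacci (a : ℝ) (ha : 0 < a)
    (c : ℤ × ℤ → ℝ)
    (hc0 : ∀ r, 0 ≤ c r)
    (hcsupp : ∀ r : ℤ × ℤ, tau < |(r.1 : ℝ) + r.2 * tau'| → c r = 0)
    (p q : ℤ) (k : ℝ)
    (hk : k = ((q : ℝ) - p * tau') / Real.sqrt 5)
    (hpq : |((p : ℝ) * tau - q) / Real.sqrt 5| ≤ a)
    (I₀ : ℝ) (J : ℂ)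
    (hI : Filter.Tendsto
      (fun N : ℕ => (1 / (2 * (N : ℝ))) *
        ∑' r : {r : ℤ × ℤ //
            |(r.1 : ℝ) + r.2 * tau| ≤ N ∧ |(r.1 : ℝ) + r.2 * tau'| ≤ tau},
          c r)
      Filter.atTop (nhds I₀))
    (hJ : Filter.Tendsto
      (fun N : ℕ => (1 / (2 * (N : ℝ)) : ℂ) *
        ∑' r : {r : ℤ × ℤ //
            |(r.1 : ℝ) + r.2 * tau| ≤ N ∧ |(r.1 : ℝ) + r.2 * tau'| ≤ tau},
          Complex.exp (-2 * Real.pi * Complex.I *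
            ((((r.1.1 : ℝ) + r.1.2 * tau) * k : ℝ) : ℂ)) * (c r : ℂ))
      Filter.atTop (nhds J)) :
    ‖(I₀ : ℂ) - J‖ ≤ 2 * Real.pi * a * tau * I₀ ∧
      (1 - 2 * Real.pi * a * tau) * I₀ ≤ J.re := by
  have h5 : Real.sqrt 5 ^ 2 = 5 := Real.sq_sqrt (by norm_num)
  have h5nn : (0:ℝ) ≤ Real.sqrt 5 := Real.sqrt_nonneg 5
  have h5pos : (0:ℝ) < Real.sqrt 5 := by nlinarith
  have htaupos : (0:ℝ) < tau := by unfold tau; nlinarith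
  set A : ℝ := 2 * Real.pi * a * tau with hA
  have hA0 : 0 ≤ A := by
    have := Real.pi_pos
    positivity
  -- the dual point
  set k' : ℝ := ((p:ℝ) * tau - q) / Real.sqrt 5 with hk'
  -- pointwise bound on the exponential
  have hexp : ∀ m n : ℤ, |(m:ℝ) + n * tau'| ≤ tau →
      ‖(1:ℂ) - Complex.exp (-2 * Real.pi * Complex.I *
        ((((m:ℝ) + n * tau) * k : ℝ) : ℂ))‖ ≤ A := by
    intro m n hy
    have hxk : ((m:ℝ) + n * tau) * k
        = ((m * p + n * q : ℤ) : ℝ) - ((m:ℝ) + n * tau') * k' := by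
      rw [hk, hk']
      unfold tau tau'
      push_cast
      field_simp
      ring
    set θ : ℝ := 2 * Real.pi * (((m:ℝ) + n * tau') * k') with hθ
    have harg : (-2 * Real.pi * Complex.I * ((((m:ℝ) + n * tau) * k : ℝ) : ℂ))
        = ((-(m * p + n * q) : ℤ) : ℂ) * (2 * Real.pi * Complex.I) + (θ:ℝ) * Complex.I := by
      rw [hxk, hθ]
      push_cast
      ring
    rw [harg, Complex.exp_add]
    rw [Complex.exp_int_mul_two_pi_mul_I, one_mul]
    rw [show (1:ℂ) - Complex.exp ((θ:ℝ) * Complex.I)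
        = -(Complex.exp ((θ:ℝ) * Complex.I) - 1) by ring, norm_neg]
    refine le_trans (exp_theta_sub_one θ) ?_
    have hk'a : |k'| ≤ a := hpq
    rw [hθ, hA]
    rw [abs_mul, abs_mul, abs_mul]
    rw [abs_of_nonneg (by norm_num : (0:ℝ) ≤ 2), abs_of_nonneg Real.pi_pos.le]
    have h1 : |(m:ℝ) + n * tau'| * |k'| ≤ tau * a :=
      mul_le_mul hy hk'a (abs_nonneg _) (le_of_lt htaupos)
    nlinarith [Real.pi_pos]
  -- per-N bound
  have hbound : ∀ N : ℕ,
      ‖(((1 / (2 * (N : ℝ))) *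
        ∑' r : {r : ℤ × ℤ //
            |(r.1 : ℝ) + r.2 * tau| ≤ N ∧ |(r.1 : ℝ) + r.2 * tau'| ≤ tau},
          c r : ℝ) : ℂ) -
        ((1 / (2 * (N : ℝ)) : ℂ) *
        ∑' r : {r : ℤ × ℤ //
            |(r.1 : ℝ) + r.2 * tau| ≤ N ∧ |(r.1 : ℝ) + r.2 * tau'| ≤ tau},
          Complex.exp (-2 * Real.pi * Complex.I *
            ((((r.1.1 : ℝ) + r.1.2 * tau) * k : ℝ) : ℂ)) * (c r : ℂ))‖
      ≤ A * ((1 / (2 * (N : ℝ))) *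
        ∑' r : {r : ℤ × ℤ //
            |(r.1 : ℝ) + r.2 * tau| ≤ N ∧ |(r.1 : ℝ) + r.2 * tau'| ≤ tau},
          c r) := by
    intro N
    haveI : Fintype {r : ℤ × ℤ //
        |(r.1 : ℝ) + r.2 * tau| ≤ N ∧ |(r.1 : ℝ) + r.2 * tau'| ≤ tau} := (braggFin N).fintype
    rw [tsum_fintype, tsum_fintype]
    set e : {r : ℤ × ℤ //
        |(r.1 : ℝ) + r.2 * tau| ≤ N ∧ |(r.1 : ℝ) + r.2 * tau'| ≤ tau} → ℂ :=
      fun r => Complex.exp (-2 * Real.pi * Complex.I *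
        ((((r.1.1 : ℝ) + r.1.2 * tau) * k : ℝ) : ℂ)) with he
    have hsum : ‖(∑ r : {r : ℤ × ℤ //
          |(r.1 : ℝ) + r.2 * tau| ≤ N ∧ |(r.1 : ℝ) + r.2 * tau'| ≤ tau}, ((c r : ℝ) : ℂ)) -
        ∑ r : {r : ℤ × ℤ //
          |(r.1 : ℝ) + r.2 * tau| ≤ N ∧ |(r.1 : ℝ) + r.2 * tau'| ≤ tau}, e r * ((c r : ℝ) : ℂ)‖
        ≤ A * ∑ r : {r : ℤ × ℤ //
          |(r.1 : ℝ) + r.2 * tau| ≤ N ∧ |(r.1 : ℝ) + r.2 * tau'| ≤ tau}, c r := by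
      rw [← Finset.sum_sub_distrib]
      refine le_trans (norm_sum_le _ _) ?_
      rw [Finset.mul_sum]
      apply Finset.sum_le_sum
      intro r _
      have hfac : ((c r : ℝ) : ℂ) - e r * ((c r : ℝ) : ℂ) = ((1:ℂ) - e r) * ((c r : ℝ) : ℂ) := by
        ring
      rw [hfac, norm_mul, Complex.norm_real, Real.norm_eq_abs, abs_of_nonneg (hc0 r)]
      exact mul_le_mul_of_nonneg_right (hexp r.1.1 r.1.2 r.2.2) (hc0 r)
    have hc1 : (((1 / (2 * (N : ℝ))) * ∑ r : {r : ℤ × ℤ //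
          |(r.1 : ℝ) + r.2 * tau| ≤ N ∧ |(r.1 : ℝ) + r.2 * tau'| ≤ tau}, c r : ℝ) : ℂ)
        = (1 / (2 * (N : ℝ)) : ℂ) * ∑ r : {r : ℤ × ℤ //
          |(r.1 : ℝ) + r.2 * tau| ≤ N ∧ |(r.1 : ℝ) + r.2 * tau'| ≤ tau}, ((c r : ℝ) : ℂ) := by
      push_cast
      ring
    rw [hc1, ← mul_sub, norm_mul]
    have habs : ‖(1 / (2 * (N : ℝ)) : ℂ)‖ = 1 / (2 * (N : ℝ)) := by
      rw [show (1 / (2 * (N : ℝ)) : ℂ) = ((1 / (2 * (N:ℝ)) : ℝ) : ℂ) by push_cast; ring,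
        Complex.norm_real, Real.norm_eq_abs, abs_of_nonneg (by positivity)]
    rw [habs]
    calc (1 / (2 * (N : ℝ))) * ‖(∑ r : {r : ℤ × ℤ //
          |(r.1 : ℝ) + r.2 * tau| ≤ N ∧ |(r.1 : ℝ) + r.2 * tau'| ≤ tau}, ((c r : ℝ) : ℂ)) -
        ∑ r : {r : ℤ × ℤ //
          |(r.1 : ℝ) + r.2 * tau| ≤ N ∧ |(r.1 : ℝ) + r.2 * tau'| ≤ tau}, e r * ((c r : ℝ) : ℂ)‖
        ≤ (1 / (2 * (N : ℝ))) * (A * ∑ r : {r : ℤ × ℤ //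
          |(r.1 : ℝ) + r.2 * tau| ≤ N ∧ |(r.1 : ℝ) + r.2 * tau'| ≤ tau}, c r) := by
          apply mul_le_mul_of_nonneg_left hsum (by positivity)
      _ = A * ((1 / (2 * (N : ℝ))) * ∑ r : {r : ℤ × ℤ //
          |(r.1 : ℝ) + r.2 * tau| ≤ N ∧ |(r.1 : ℝ) + r.2 * tau'| ≤ tau}, c r) := by ring
  -- pass to the limit
  have hIc : Filter.Tendsto
      (fun N : ℕ => (((1 / (2 * (N : ℝ))) *
        ∑' r : {r : ℤ × ℤ //
            |(r.1 : ℝ) + r.2 * tau| ≤ N ∧ |(r.1 : ℝ) + r.2 * tau'| ≤ tau},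
          c r : ℝ) : ℂ))
      Filter.atTop (nhds ((I₀ : ℝ) : ℂ)) :=
    (Complex.continuous_ofReal.tendsto _).comp hI
  have hdiff : Filter.Tendsto
      (fun N : ℕ => ‖(((1 / (2 * (N : ℝ))) *
        ∑' r : {r : ℤ × ℤ //
            |(r.1 : ℝ) + r.2 * tau| ≤ N ∧ |(r.1 : ℝ) + r.2 * tau'| ≤ tau},
          c r : ℝ) : ℂ) -
        ((1 / (2 * (N : ℝ)) : ℂ) *
        ∑' r : {r : ℤ × ℤ //
            |(r.1 : ℝ) + r.2 * tau| ≤ N ∧ |(r.1 : ℝ) + r.2 * tau'| ≤ tau},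
          Complex.exp (-2 * Real.pi * Complex.I *
            ((((r.1.1 : ℝ) + r.1.2 * tau) * k : ℝ) : ℂ)) * (c r : ℂ))‖)
      Filter.atTop (nhds ‖(I₀ : ℂ) - J‖) :=
    (continuous_norm.tendsto _).comp (hIc.sub hJ)
  have hrhs : Filter.Tendsto
      (fun N : ℕ => A * ((1 / (2 * (N : ℝ))) *
        ∑' r : {r : ℤ × ℤ //
            |(r.1 : ℝ) + r.2 * tau| ≤ N ∧ |(r.1 : ℝ) + r.2 * tau'| ≤ tau},
          c r))
      Filter.atTop (nhds (A * I₀)) := hI.const_mul A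
  have h1 : ‖(I₀ : ℂ) - J‖ ≤ A * I₀ :=
    le_of_tendsto_of_tendsto' hdiff hrhs hbound
  refine ⟨h1, ?_⟩
  have h2 : ((I₀ : ℂ) - J).re ≤ ‖(I₀ : ℂ) - J‖ := Complex.re_le_norm _
  have h3 : ((I₀ : ℂ) - J).re = I₀ - J.re := by simp
  rw [h3] at h2
  nlinarith [h1, h2]
end

section
/- Let τ = (1+√5)/2, τ′ = (1−√5)/2, and define g : ℝ → ℝ by g(x) = sinc(2π(τ+1)x)·sinc((2π/3)x)³, where sinc(x) = sin(x)/x for x ≠ 0 and sinc(0) = 1. Let 0 < α < 1/81 and let p, q ∈ ℤ be such that t⋆ := (pτ−q)/√5 satisfies |t⋆| ≤ α. Then for every real s, the sum over all pairs (m,n) ∈ ℤ² with (n−mτ′)/√5 ∈ [s−1/2, s+3/2] of |g((mτ−n)/√5) − g((mτ−n)/√5 − t⋆)| converges, and ((3+√5)/√5) · Σ_{(m,n)∈ℤ²: (n−mτ′)/√5 ∈ [s−1/2, s+3/2]} |g((mτ−n)/√5) − g((mτ−n)/√5 − t⋆)| < 2507·α^{3/4}. -/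
noncomputable def sinc (x : ℝ) : ℝ := if x = 0 then 1 else Real.sin x / x

/-- The function `g(x) = sinc(2π(τ+1)x)·sinc((2π/3)x)³`. -/
noncomputable def g (x : ℝ) : ℝ :=
  sinc (2 * Real.pi * (tau + 1) * x) * (sinc (2 * Real.pi / 3 * x)) ^ 3



lemma abs_sinc_le_one (x : ℝ) : |sinc x| ≤ 1 := by
  unfold sinc
  split_ifs with h
  · simp
  · rw [abs_div]
    exact div_le_one_of_le₀ Real.abs_sin_le_abs (abs_nonneg _)

lemma abs_sinc_le (x : ℝ) (hx : x ≠ 0) : |sinc x| ≤ 1 / |x| := by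
  unfold sinc
  rw [if_neg hx, abs_div]
  gcongr
  exact Real.abs_sin_le_one x

open intervalIntegral in
lemma sinc_eq_integral (x : ℝ) : sinc x = ∫ t in (0:ℝ)..1, Real.cos (x * t) := by
  unfold sinc
  split_ifs with h
  · simp [h]
  · rw [integral_comp_mul_left Real.cos h]
    simp [Real.sin_zero, integral_cos, div_eq_inv_mul]

lemma abs_cos_sub_cos_le (a b : ℝ) : |Real.cos a - Real.cos b| ≤ |a - b| := by
  rw [Real.cos_sub_cos, abs_mul, abs_mul, abs_neg]
  have h1 : |Real.sin ((a+b)/2)| ≤ 1 := Real.abs_sin_le_one _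
  have h2 : |Real.sin ((a-b)/2)| ≤ |(a-b)/2| := Real.abs_sin_le_abs
  have h3 : |(a-b)/2| = |a-b|/2 := by rw [abs_div]; norm_num
  calc |(2:ℝ)| * |Real.sin ((a+b)/2)| * |Real.sin ((a-b)/2)|
      ≤ |(2:ℝ)| * 1 * (|a-b|/2) := by
        apply mul_le_mul (mul_le_mul le_rfl h1 (abs_nonneg _) (abs_nonneg _))
          (h3 ▸ h2) (abs_nonneg _)
        positivity
    _ = |a - b| := by rw [abs_of_nonneg (by norm_num : (0:ℝ) ≤ 2)]; ring

lemma abs_sinc_sub_sinc (x y : ℝ) : |sinc x - sinc y| ≤ |x - y| := by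
  rw [sinc_eq_integral, sinc_eq_integral, ← intervalIntegral.integral_sub]
  · have := intervalIntegral.norm_integral_le_of_norm_le_const
      (a := 0) (b := 1) (C := |x - y|)
      (f := fun t => Real.cos (x * t) - Real.cos (y * t)) ?_
    · simpa using this.trans (by norm_num)
    · intro t ht
      rw [Set.uIoc_of_le (by norm_num : (0:ℝ) ≤ 1)] at ht
      rw [Real.norm_eq_abs]
      calc |Real.cos (x*t) - Real.cos (y*t)| ≤ |x*t - y*t| := abs_cos_sub_cos_le _ _
        _ = |x - y| * |t| := by rw [← abs_mul]; ring_nf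
        _ ≤ |x - y| * 1 := by
            apply mul_le_mul_of_nonneg_left _ (abs_nonneg _)
            rw [abs_of_nonneg ht.1.le]; exact ht.2
        _ = |x - y| := mul_one _
  · exact (Real.continuous_cos.comp (continuous_const.mul continuous_id)).intervalIntegrable _ _
  · exact (Real.continuous_cos.comp (continuous_const.mul continuous_id)).intervalIntegrable _ _

lemma sqrt5_sq : Real.sqrt 5 ^ 2 = 5 := Real.sq_sqrt (by norm_num)
lemma sqrt5_lb : (2.2360 : ℝ) ≤ Real.sqrt 5 := by
  nlinarith [sqrt5_sq, Real.sqrt_nonneg 5]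
lemma sqrt5_ub : Real.sqrt 5 ≤ 2.2361 := by
  nlinarith [sqrt5_sq, Real.sqrt_nonneg 5]

lemma apos : 0 < 2 * Real.pi * (tau + 1) := by
  have := Real.pi_pos
  have := sqrt5_lb
  unfold tau; nlinarith

lemma bpos : 0 < 2 * Real.pi / 3 := by positivity

lemma abs_g_le_one (x : ℝ) : |g x| ≤ 1 := by
  unfold g
  rw [abs_mul, abs_pow]
  calc |sinc (2*Real.pi*(tau+1)*x)| * |sinc (2*Real.pi/3*x)|^3 ≤ 1 * 1^3 := by
        apply mul_le_mul (abs_sinc_le_one _) (pow_le_pow_left₀ (abs_nonneg _) (abs_sinc_le_one _) 3)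
          (by positivity) (by norm_num)
    _ = 1 := by norm_num

lemma abs_g_le (x : ℝ) (hx : x ≠ 0) : |g x| ≤ (1/140) / x^4 := by
  have hax : 2 * Real.pi * (tau + 1) * x ≠ 0 := by
    have := apos; intro h; apply hx; rcases mul_eq_zero.1 h with h|h; · nlinarith
    exact h
  have hbx : 2 * Real.pi / 3 * x ≠ 0 := by
    have := bpos; intro h; apply hx; rcases mul_eq_zero.1 h with h|h; · nlinarith
    exact h
  have h1 := abs_sinc_le _ hax
  have h2 := abs_sinc_le _ hbx
  have hxpos : 0 < |x| := abs_pos.2 hx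
  have hpi := Real.pi_gt_d6
  have hs5 := sqrt5_lb
  unfold g
  rw [abs_mul, abs_pow]
  have key : |sinc (2*Real.pi*(tau+1)*x)| * |sinc (2*Real.pi/3*x)|^3
      ≤ (1/(2*Real.pi*(tau+1)*|x|)) * (1/(2*Real.pi/3*|x|))^3 := by
    apply mul_le_mul ?_ ?_ (by positivity) ?_
    · calc |sinc (2*Real.pi*(tau+1)*x)| ≤ 1/|2*Real.pi*(tau+1)*x| := h1
        _ = 1/(2*Real.pi*(tau+1)*|x|) := by
          rw [abs_mul, abs_of_pos apos]
    · apply pow_le_pow_left₀ (abs_nonneg _)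
      calc |sinc (2*Real.pi/3*x)| ≤ 1/|2*Real.pi/3*x| := h2
        _ = 1/(2*Real.pi/3*|x|) := by rw [abs_mul, abs_of_pos bpos]
    · have := apos; positivity
  refine key.trans ?_
  have hx4 : x^4 = |x|^4 := by rw [← abs_pow]; rw [abs_of_nonneg (by positivity)]
  rw [hx4]
  have hpi2 : (9.8696:ℝ) ≤ Real.pi^2 := by nlinarith [Real.pi_gt_d6]
  have hpi4 : (97.40:ℝ) ≤ Real.pi^4 := by nlinarith [hpi2]
  have hcoeff : (140:ℝ) ≤ 2*Real.pi*(tau+1) * (2*Real.pi/3)^3 := by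
    unfold tau; nlinarith [hpi4, sqrt5_lb, Real.pi_pos]
  have hA : 1/(2*Real.pi*(tau+1)*|x|) * (1/(2*Real.pi/3*|x|))^3
      = 1/((2*Real.pi*(tau+1) * (2*Real.pi/3)^3) * |x|^4) := by
    field_simp
  rw [hA, div_div]
  apply one_div_le_one_div_of_le (by positivity)
  apply mul_le_mul_of_nonneg_right hcoeff (by positivity)

lemma cube_diff (u v : ℝ) (hu : |u| ≤ 1) (hv : |v| ≤ 1) : |u^3 - v^3| ≤ 3 * |u - v| := by
  have h : u^3 - v^3 = (u - v) * (u^2 + u*v + v^2) := by ring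
  rw [h, abs_mul]
  have h2 : |u^2 + u*v + v^2| ≤ 3 := by
    have hu2 : u^2 ≤ 1 := by nlinarith [abs_nonneg u, sq_abs u]
    have hv2 : v^2 ≤ 1 := by nlinarith [abs_nonneg v, sq_abs v]
    have huv : |u*v| ≤ 1 := by rw [abs_mul]; nlinarith [abs_nonneg u, abs_nonneg v]
    calc |u^2 + u*v + v^2| ≤ |u^2| + |u*v| + |v^2| := abs_add_three _ _ _
      _ ≤ 1 + 1 + 1 := by
        gcongr
        · rw [abs_of_nonneg (sq_nonneg u)]; exact hu2
        · rw [abs_of_nonneg (sq_nonneg v)]; exact hv2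
      _ = 3 := by norm_num
  calc |u - v| * |u^2 + u*v + v^2| ≤ |u - v| * 3 := by
        exact mul_le_mul_of_nonneg_left h2 (abs_nonneg _)
    _ = 3 * |u - v| := by ring

lemma abs_g_sub_g (x y : ℝ) : |g x - g y| ≤ 23 * |x - y| := by
  set a := 2 * Real.pi * (tau + 1) with ha
  set b := 2 * Real.pi / 3 with hb
  have hdecomp : g x - g y
      = sinc (a*x) * ((sinc (b*x))^3 - (sinc (b*y))^3)
        + (sinc (a*x) - sinc (a*y)) * (sinc (b*y))^3 := by
    unfold g; ring
  have h1 : |sinc (a*x) * ((sinc (b*x))^3 - (sinc (b*y))^3)| ≤ 3 * (b * |x - y|) := by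
    rw [abs_mul]
    calc |sinc (a*x)| * |(sinc (b*x))^3 - (sinc (b*y))^3|
        ≤ 1 * (3 * |sinc (b*x) - sinc (b*y)|) := by
          apply mul_le_mul (abs_sinc_le_one _)
            (cube_diff _ _ (abs_sinc_le_one _) (abs_sinc_le_one _)) (abs_nonneg _) one_pos.le
      _ = 3 * |sinc (b*x) - sinc (b*y)| := by ring
      _ ≤ 3 * |b*x - b*y| := by
          exact mul_le_mul_of_nonneg_left (abs_sinc_sub_sinc _ _) (by norm_num)
      _ = 3 * (b * |x - y|) := by
          rw [← mul_sub, abs_mul, abs_of_pos bpos]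
  have h2 : |(sinc (a*x) - sinc (a*y)) * (sinc (b*y))^3| ≤ a * |x - y| := by
    rw [abs_mul, abs_pow]
    calc |sinc (a*x) - sinc (a*y)| * |sinc (b*y)|^3 ≤ |a*x - a*y| * 1^3 := by
          apply mul_le_mul (abs_sinc_sub_sinc _ _)
            (pow_le_pow_left₀ (abs_nonneg _) (abs_sinc_le_one _) 3) (by positivity) (abs_nonneg _)
      _ = a * |x - y| := by rw [← mul_sub, abs_mul, abs_of_pos apos]; ring
  have hab : 3 * b + a ≤ 23 := by
    rw [ha, hb]; unfold tau; nlinarith [Real.pi_lt_d6, sqrt5_ub, Real.pi_pos, Real.sqrt_nonneg 5, mul_le_mul Real.pi_lt_d6.le sqrt5_ub (Real.sqrt_nonneg 5) (by norm_num : (0:ℝ) ≤ 3.141593)]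
  calc |g x - g y| ≤ |sinc (a*x) * ((sinc (b*x))^3 - (sinc (b*y))^3)|
        + |(sinc (a*x) - sinc (a*y)) * (sinc (b*y))^3| := by
        rw [hdecomp]; exact abs_add_le _ _
    _ ≤ 3 * (b * |x - y|) + a * |x - y| := add_le_add h1 h2
    _ = (3 * b + a) * |x - y| := by ring
    _ ≤ 23 * |x - y| := mul_le_mul_of_nonneg_right hab (abs_nonneg _)



lemma tel (K : ℕ) (hK : 2 ≤ K) (N : ℕ) :
    ∑ i ∈ Finset.Icc K N, (1:ℝ)/(i:ℝ)^4
      ≤ 1/(3*((K:ℝ)-1)^3) - 1/(3*(max (N:ℝ) ((K:ℝ)-1))^3) := by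
  induction N with
  | zero =>
    rw [Finset.Icc_eq_empty (by omega)]
    have h0 : max (0:ℝ) ((K:ℝ)-1) = (K:ℝ)-1 := by
      apply max_eq_right
      have : (2:ℝ) ≤ (K:ℝ) := by exact_mod_cast hK
      linarith
    simp [h0]
  | succ N ih =>
    by_cases h : K ≤ N + 1
    · have hN1 : (K:ℝ) - 1 ≤ (N:ℝ) := by
        have h2 : K - 1 ≤ N := by omega
        have h3 := (Nat.cast_le (α := ℝ)).2 h2
        rw [Nat.cast_sub (by omega)] at h3
        push_cast at h3; linarith
      have hNpos : (1:ℝ) ≤ (N:ℝ) := by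
        have : 1 ≤ N := by omega
        exact_mod_cast this
      have hmaxN : max (N:ℝ) ((K:ℝ)-1) = (N:ℝ) := max_eq_left hN1
      have hmaxN1 : max ((N:ℝ)+1) ((K:ℝ)-1) = (N:ℝ)+1 := max_eq_left (by linarith)
      rw [Finset.sum_Icc_succ_top h]
      push_cast
      rw [hmaxN1]
      rw [hmaxN] at ih
      have key : (1:ℝ)/((N:ℝ)+1)^4 ≤ 1/(3*(N:ℝ)^3) - 1/(3*((N:ℝ)+1)^3) := by
        have hN0 : (0:ℝ) < (N:ℝ) := by linarith
        rw [← sub_nonneg]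
        have hexp : 1/(3*(N:ℝ)^3) - 1/(3*((N:ℝ)+1)^3) - 1/((N:ℝ)+1)^4
            = (6*(N:ℝ)^2+4*(N:ℝ)+1) / (3*(N:ℝ)^3*((N:ℝ)+1)^4) := by
          field_simp
          ring
        rw [hexp]
        positivity
      linarith
    · rw [Finset.Icc_eq_empty h]
      have hmax : max ((N:ℝ)+1) ((K:ℝ)-1) = (K:ℝ)-1 := by
        apply max_eq_right
        have h2 : N + 2 ≤ K := by omega
        have h3 := (Nat.cast_le (α := ℝ)).2 h2
        push_cast at h3; linarith
      push_cast
      rw [hmax]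
      simp

lemma tel' (K : ℕ) (hK : 2 ≤ K) (J : Finset ℕ) (hJ : ∀ i ∈ J, K ≤ i) :
    ∑ i ∈ J, (1:ℝ)/(i:ℝ)^4 ≤ 1/(3*((K:ℝ)-1)^3) := by
  set N : ℕ := J.sup id with hN
  have hsub : J ⊆ Finset.Icc K N := by
    intro i hi
    rw [Finset.mem_Icc]
    exact ⟨hJ i hi, Finset.le_sup (f := id) hi⟩
  have h1 : ∑ i ∈ J, (1:ℝ)/(i:ℝ)^4 ≤ ∑ i ∈ Finset.Icc K N, (1:ℝ)/(i:ℝ)^4 :=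
    Finset.sum_le_sum_of_subset_of_nonneg hsub (fun i _ _ => by positivity)
  have h2 := tel K hK N
  have h3 : (0:ℝ) ≤ 1/(3*(max (N:ℝ) ((K:ℝ)-1))^3) := by
    have hKR : (2:ℝ) ≤ (K:ℝ) := by exact_mod_cast hK
    have : (0:ℝ) < max (N:ℝ) ((K:ℝ)-1) := lt_of_lt_of_le (by linarith) (le_max_right _ _)
    positivity
  linarith

lemma telZ (K : ℕ) (hK : 2 ≤ K) (J : Finset ℤ) (hJ : ∀ m ∈ J, K + 3 ≤ m.natAbs) :
    ∑ m ∈ J, (1:ℝ)/(|(m:ℝ)|-3)^4 ≤ 2/(3*((K:ℝ)-1)^3) := by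
  have hval : ∀ m ∈ J, (1:ℝ)/(|(m:ℝ)|-3)^4 = 1/((m.natAbs - 3 : ℕ):ℝ)^4 := by
    intro m hm
    have h3 : 3 ≤ m.natAbs := by have := hJ m hm; omega
    rw [Nat.cast_sub h3, Nat.cast_natAbs]
    norm_num
  have side : ∀ (Jh : Finset ℤ), Jh ⊆ J → (Set.InjOn (fun m : ℤ => m.natAbs - 3) Jh) →
      ∑ m ∈ Jh, (1:ℝ)/(|(m:ℝ)|-3)^4 ≤ 1/(3*((K:ℝ)-1)^3) := by
    intro Jh hsub hinj
    calc ∑ m ∈ Jh, (1:ℝ)/(|(m:ℝ)|-3)^4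
        = ∑ m ∈ Jh, (1:ℝ)/(((m.natAbs - 3 : ℕ)):ℝ)^4 :=
          Finset.sum_congr rfl (fun m hm => hval m (hsub hm))
      _ = ∑ i ∈ Jh.image (fun m : ℤ => m.natAbs - 3), (1:ℝ)/((i:ℕ):ℝ)^4 :=
          (Finset.sum_image (f := fun i : ℕ => (1:ℝ)/(i:ℝ)^4) (fun x hx y hy h => hinj hx hy h)).symm
      _ ≤ 1/(3*((K:ℝ)-1)^3) := by
          apply tel' K hK
          intro i hi
          rw [Finset.mem_image] at hi
          obtain ⟨m, hm, rfl⟩ := hi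
          have := hJ m (hsub hm)
          omega
  have hsplit := Finset.sum_filter_add_sum_filter_not J (fun m : ℤ => 0 ≤ m)
    (fun m : ℤ => (1:ℝ)/(|(m:ℝ)|-3)^4)
  have hpos := side (J.filter (fun m : ℤ => 0 ≤ m)) (Finset.filter_subset _ _) ?_
  · have hneg := side (J.filter (fun m : ℤ => ¬ 0 ≤ m)) (Finset.filter_subset _ _) ?_
    · have h2 : (2:ℝ)/(3*((K:ℝ)-1)^3) = 1/(3*((K:ℝ)-1)^3) + 1/(3*((K:ℝ)-1)^3) := by ring
      linarith
    · intro x hx y hy h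
      simp only [Finset.coe_filter, Set.mem_setOf_eq, Finset.mem_filter] at hx hy
      have hx3 := hJ x hx.1; have hy3 := hJ y hy.1
      simp only at h
      omega
  · intro x hx y hy h
    simp only [Finset.coe_filter, Set.mem_setOf_eq, Finset.mem_filter] at hx hy
    have hx3 := hJ x hx.1; have hy3 := hJ y hy.1
    simp only at h
    omega

set_option maxHeartbeats 1000000 in
/-- Norm almost periodicity of the Fourier transform of the ping-pong measure for
Fibonacci: for `0 < α < 1/81` and `t⋆ = (pτ−q)/√5` with `|t⋆| ≤ α`, for every real
`s` the sum over the pairs `(m,n) ∈ ℤ²` with `(n−mτ′)/√5 ∈ [s−1/2, s+3/2]` of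
`|g((mτ−n)/√5) − g((mτ−n)/√5 − t⋆)|` converges, and
`((3+√5)/√5)` times this sum is `< 2507·α^{3/4}`. -/
theorem ping_pong_fourier_norm_almost_period (α : ℝ) (hα0 : 0 < α) (hα1 : α < 1 / 81)
    (p q : ℤ) (tstar : ℝ) (ht : tstar = ((p : ℝ) * tau - q) / Real.sqrt 5)
    (htα : |tstar| ≤ α) (s : ℝ) :
    Summable (fun r : {r : ℤ × ℤ //
        ((r.2 : ℝ) - r.1 * tau') / Real.sqrt 5 ∈ Set.Icc (s - 1 / 2) (s + 3 / 2)} =>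
      |g (((r.1.1 : ℝ) * tau - r.1.2) / Real.sqrt 5) -
        g (((r.1.1 : ℝ) * tau - r.1.2) / Real.sqrt 5 - tstar)|) ∧
    (3 + Real.sqrt 5) / Real.sqrt 5 *
      ∑' r : {r : ℤ × ℤ //
          ((r.2 : ℝ) - r.1 * tau') / Real.sqrt 5 ∈ Set.Icc (s - 1 / 2) (s + 3 / 2)},
        |g (((r.1.1 : ℝ) * tau - r.1.2) / Real.sqrt 5) -
          g (((r.1.1 : ℝ) * tau - r.1.2) / Real.sqrt 5 - tstar)|
      < 2507 * α ^ ((3 : ℝ) / 4) := by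
  classical
  have hs5 : (0:ℝ) < Real.sqrt 5 := lt_of_lt_of_le (by norm_num) sqrt5_lb
  -- β and M
  set β : ℝ := α ^ ((1:ℝ)/4) with hβdef
  have hβ0 : 0 < β := Real.rpow_pos_of_pos hα0 _
  have hβ13 : β < 1/3 := by
    have h1 : α ^ ((1:ℝ)/4) < (1/81 : ℝ) ^ ((1:ℝ)/4) :=
      Real.rpow_lt_rpow hα0.le hα1 (by norm_num)
    have h2 : ((1/81:ℝ)) ^ ((1:ℝ)/4) = 1/3 := by
      rw [show (1/81:ℝ) = (1/3)^(4:ℕ) by norm_num, ← Real.rpow_natCast ((1:ℝ)/3) 4,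
        ← Real.rpow_mul (by norm_num)]
      norm_num
    rw [hβdef]; rw [h2] at h1; exact h1
  have hβ3 : β ^ 3 = α ^ ((3:ℝ)/4) := by
    rw [hβdef, ← Real.rpow_natCast (α ^ ((1:ℝ)/4)) 3, ← Real.rpow_mul hα0.le]
    norm_num
  have hβ4 : β ^ 4 = α := by
    rw [hβdef, ← Real.rpow_natCast (α ^ ((1:ℝ)/4)) 4, ← Real.rpow_mul hα0.le]
    norm_num
  have hinvβ : 3 < 1/β := by rw [lt_div_iff₀ hβ0]; linarith
  set M : ℕ := ⌈1/β⌉₊ + 3 with hMdef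
  have hM3 : 1/β ≤ (M:ℝ) - 3 := by
    have := Nat.le_ceil (1/β)
    rw [hMdef]; push_cast; linarith
  have hM4 : (M:ℝ) ≤ 1/β + 4 := by
    have := Nat.ceil_lt_add_one (le_of_lt (by positivity : (0:ℝ) < 1/β))
    rw [hMdef]; push_cast; linarith
  have hM7 : 7 ≤ M := by
    have h4 : 3 < ⌈1/β⌉₊ := by rwa [Nat.lt_ceil]; 
    omega
  have hMR : (7:ℝ) ≤ (M:ℝ) := by exact_mod_cast hM7
  set k₀ : ℤ := ⌊s + 1/2⌋ with hk0def
  set Φ : ℤ → ℝ := fun m =>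
    if (m - k₀).natAbs ≤ M then 23*α else (1/70) * (1/((|((m:ℝ)) - (k₀:ℝ)|) - 3)^4) with hΦdef
  have hfar : ∀ m : ℤ, ¬((m - k₀).natAbs ≤ M) → (M:ℝ) + 1 ≤ |(m:ℝ) - (k₀:ℝ)| := by
    intro m h
    have h1 : M + 1 ≤ (m - k₀).natAbs := by omega
    have h2 : ((M:ℝ) + 1) ≤ (((m - k₀).natAbs : ℕ) : ℝ) := by exact_mod_cast h1
    rwa [Nat.cast_natAbs, show ((|m - k₀| : ℤ) : ℝ) = |(m:ℝ) - (k₀:ℝ)| by push_cast; ring_nf] at h2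
  have hΦnn : ∀ m : ℤ, 0 ≤ Φ m := by
    intro m
    simp only [hΦdef]
    split_ifs with h
    · positivity
    · have hj := hfar m h
      have : (0:ℝ) < |(m:ℝ) - (k₀:ℝ)| - 3 := by linarith
      positivity
  -- pointwise bound
  have hpt : ∀ r : {r : ℤ × ℤ //
      ((r.2 : ℝ) - r.1 * tau') / Real.sqrt 5 ∈ Set.Icc (s - 1 / 2) (s + 3 / 2)},
      |g (((r.1.1 : ℝ) * tau - r.1.2) / Real.sqrt 5) -
        g (((r.1.1 : ℝ) * tau - r.1.2) / Real.sqrt 5 - tstar)| ≤ Φ r.1.1 := by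
    intro r
    obtain ⟨hy1, hy2⟩ := Set.mem_Icc.1 r.2
    set m : ℤ := r.1.1
    set n : ℤ := r.1.2
    set y : ℝ := ((n : ℝ) - m * tau') / Real.sqrt 5
    set Y : ℝ := ((m : ℝ) * tau - n) / Real.sqrt 5 with hYdef
    have hYeq : Y = (m:ℝ) - y := by
      rw [hYdef]
      show ((m : ℝ) * tau - n) / Real.sqrt 5 = (m:ℝ) - ((n : ℝ) - m * tau') / Real.sqrt 5
      unfold tau tau'
      field_simp
      nlinarith [sqrt5_sq]
    by_cases hc : (m - k₀).natAbs ≤ M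
    · have hΦval : Φ m = 23*α := by simp only [hΦdef]; rw [if_pos hc]
      rw [hΦval]
      calc |g Y - g (Y - tstar)| ≤ 23 * |Y - (Y - tstar)| := abs_g_sub_g _ _
        _ = 23 * |tstar| := by ring_nf
        _ ≤ 23 * α := by linarith [htα]
    · have hΦval : Φ m = (1/70) * (1/((|((m:ℝ)) - (k₀:ℝ)|) - 3)^4) := by
        simp only [hΦdef]; rw [if_neg hc]
      have hj := hfar m hc
      set jR : ℝ := |(m:ℝ) - (k₀:ℝ)| with hjR
      -- k₀ close to s + 1/2
      have hk1 : (k₀:ℝ) ≤ s + 1/2 := Int.floor_le _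
      have hk2 : s + 1/2 < (k₀:ℝ) + 1 := Int.lt_floor_add_one _
      have hYnear : |Y - ((m:ℝ) - (k₀:ℝ))| ≤ 2 := by
        have he : Y - ((m:ℝ) - (k₀:ℝ)) = (k₀:ℝ) - y := by rw [hYeq]; ring
        rw [he, abs_le]
        constructor <;> [linarith; linarith]
      have habs1 : jR - 2 ≤ |Y| := by
        have := abs_sub_abs_le_abs_sub ((m:ℝ) - (k₀:ℝ)) Y
        rw [abs_sub_comm ((m:ℝ) - (k₀:ℝ)) Y] at this
        linarith
      have habs2 : jR - 3 ≤ |Y - tstar| := by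
        have h1 : |Y| - |tstar| ≤ |Y - tstar| := abs_sub_abs_le_abs_sub _ _
        have hα1' : α ≤ 1 := by linarith
        linarith
      have hjR3 : (0:ℝ) < jR - 3 := by linarith
      have hY0 : Y ≠ 0 := by
        intro h; rw [h, abs_zero] at habs1; linarith
      have hYt0 : Y - tstar ≠ 0 := by
        intro h; rw [h, abs_zero] at habs2; linarith
      have hb1 : |g Y| ≤ (1/140) / (jR - 3)^4 := by
        refine (abs_g_le Y hY0).trans ?_
        have hY4 : (jR - 3)^4 ≤ Y^4 := by
          calc (jR - 3)^4 ≤ |Y|^4 := by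
                apply pow_le_pow_left₀ (by linarith) (by linarith)
            _ = Y^4 := by rw [← abs_pow, abs_of_nonneg (by positivity)]
        apply div_le_div_of_nonneg_left (by norm_num) (by positivity) hY4
      have hb2 : |g (Y - tstar)| ≤ (1/140) / (jR - 3)^4 := by
        refine (abs_g_le _ hYt0).trans ?_
        have hY4 : (jR - 3)^4 ≤ (Y - tstar)^4 := by
          calc (jR - 3)^4 ≤ |Y - tstar|^4 := by
                apply pow_le_pow_left₀ (by linarith) habs2
            _ = (Y - tstar)^4 := by rw [← abs_pow, abs_of_nonneg (by positivity)]
        apply div_le_div_of_nonneg_left (by norm_num) (by positivity) hY4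
      rw [hΦval]
      calc |g Y - g (Y - tstar)| ≤ |g Y| + |g (Y - tstar)| := abs_sub (g Y) (g (Y - tstar))
        _ ≤ (1/140) / (jR - 3)^4 + (1/140) / (jR - 3)^4 := add_le_add hb1 hb2
        _ = (1/70) * (1/(jR - 3)^4) := by ring
  -- fiber counting
  have hfib : ∀ (S : Finset {r : ℤ × ℤ //
      ((r.2 : ℝ) - r.1 * tau') / Real.sqrt 5 ∈ Set.Icc (s - 1 / 2) (s + 3 / 2)}) (b : ℤ),
      (S.filter (fun r => r.1.1 = b)).card ≤ 5 := by
    intro S b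
    set cb : ℤ := ⌈Real.sqrt 5 * (s - 1/2) + (b:ℝ) * tau'⌉ with hcb
    have hmaps : ∀ r ∈ S.filter (fun r => r.1.1 = b), r.1.2 ∈ Finset.Icc cb (cb + 4) := by
      intro r hr
      rw [Finset.mem_filter] at hr
      obtain ⟨-, hrb⟩ := hr
      obtain ⟨hy1, hy2⟩ := Set.mem_Icc.1 r.2
      rw [hrb] at hy1 hy2
      rw [Finset.mem_Icc]
      have hlo : Real.sqrt 5 * (s - 1/2) + (b:ℝ) * tau' ≤ (r.1.2 : ℝ) := by
        rw [le_div_iff₀ hs5] at hy1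
        linarith
      have hhi : (r.1.2 : ℝ) ≤ Real.sqrt 5 * (s - 1/2) + (b:ℝ) * tau' + 2 * Real.sqrt 5 := by
        rw [div_le_iff₀ hs5] at hy2
        nlinarith
      constructor
      · exact_mod_cast Int.ceil_le.2 hlo
      · have h1 : (r.1.2 : ℝ) < (cb : ℝ) + 5 := by
          have := Int.le_ceil (Real.sqrt 5 * (s - 1/2) + (b:ℝ) * tau')
          nlinarith [sqrt5_ub]
        have h2 : (r.1.2 : ℝ) < ((cb + 5 : ℤ) : ℝ) := by push_cast; linarith
        have := (Int.cast_lt (R := ℝ)).1 h2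
        omega
    have hinj : Set.InjOn (fun r : {r : ℤ × ℤ //
        ((r.2 : ℝ) - r.1 * tau') / Real.sqrt 5 ∈ Set.Icc (s - 1 / 2) (s + 3 / 2)} => r.1.2)
        (S.filter (fun r => r.1.1 = b)) := by
      intro r1 h1 r2 h2 h
      simp only [Finset.coe_filter, Set.mem_setOf_eq] at h1 h2
      apply Subtype.ext
      apply Prod.ext
      · rw [h1.2, h2.2]
      · exact h
    calc (S.filter (fun r => r.1.1 = b)).card ≤ (Finset.Icc cb (cb + 4)).card :=
          Finset.card_le_card_of_injOn _ hmaps hinj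
      _ = 5 := by rw [Int.card_Icc]; omega
  -- sum of Φ over any finset of ℤ
  have hΦsum : ∀ I : Finset ℤ,
      ∑ m ∈ I, Φ m ≤ 23*α*(2*(M:ℝ)+1) + (1/70) * (2/(3*((M:ℝ)-3)^3)) := by
    intro I
    rw [← Finset.sum_filter_add_sum_filter_not I (fun m => (m - k₀).natAbs ≤ M) Φ]
    have hnear : ∑ m ∈ I.filter (fun m => (m - k₀).natAbs ≤ M), Φ m ≤ 23*α*(2*(M:ℝ)+1) := by
      have hval : ∀ m ∈ I.filter (fun m => (m - k₀).natAbs ≤ M), Φ m = 23*α := by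
        intro m hm
        rw [Finset.mem_filter] at hm
        simp only [hΦdef]
        rw [if_pos hm.2]
      rw [Finset.sum_congr rfl hval, Finset.sum_const, nsmul_eq_mul]
      have hcard : (I.filter (fun m => (m - k₀).natAbs ≤ M)).card ≤ 2*M + 1 := by
        calc (I.filter (fun m => (m - k₀).natAbs ≤ M)).card
            ≤ (Finset.Icc (k₀ - M) (k₀ + M)).card := by
              apply Finset.card_le_card
              intro m hm
              rw [Finset.mem_filter] at hm
              rw [Finset.mem_Icc]
              omega
          _ = 2*M + 1 := by rw [Int.card_Icc]; omega
      calc ((I.filter (fun m => (m - k₀).natAbs ≤ M)).card : ℝ) * (23*α)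
          ≤ ((2*M + 1 : ℕ) : ℝ) * (23*α) := by
            apply mul_le_mul_of_nonneg_right _ (by positivity)
            exact_mod_cast hcard
        _ = 23*α*(2*(M:ℝ)+1) := by push_cast; ring
    have hfar2 : ∑ m ∈ I.filter (fun m => ¬((m - k₀).natAbs ≤ M)), Φ m
        ≤ (1/70) * (2/(3*((M:ℝ)-3)^3)) := by
      set J := I.filter (fun m => ¬((m - k₀).natAbs ≤ M)) with hJ
      have hval : ∀ m ∈ J, Φ m = (1/70) * (1/((|(((m - k₀ : ℤ)):ℝ)|) - 3)^4) := by
        intro m hm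
        rw [hJ, Finset.mem_filter] at hm
        simp only [hΦdef]
        rw [if_neg hm.2]
        norm_num [Int.cast_sub]
      rw [Finset.sum_congr rfl hval, ← Finset.mul_sum]
      have himg : ∑ m ∈ J, (1:ℝ)/((|(((m - k₀ : ℤ)):ℝ)|) - 3)^4
          = ∑ z ∈ J.image (fun m => m - k₀), (1:ℝ)/((|((z:ℤ):ℝ)|) - 3)^4 := by
        rw [Finset.sum_image (f := fun z : ℤ => (1:ℝ)/((|((z:ℤ):ℝ)|) - 3)^4)]
        intro x hx y hy h
        have h' : x - k₀ = y - k₀ := h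
        omega
      rw [himg]
      have htel := telZ (M - 2) (by omega) (J.image (fun m => m - k₀)) ?_
      · have hcast : ((M - 2 : ℕ) : ℝ) - 1 = (M:ℝ) - 3 := by
          rw [Nat.cast_sub (by omega)]; push_cast; ring
        rw [hcast] at htel
        apply mul_le_mul_of_nonneg_left htel (by norm_num)
      · intro z hz
        rw [Finset.mem_image] at hz
        obtain ⟨m, hm, rfl⟩ := hz
        rw [hJ, Finset.mem_filter] at hm
        omega
    linarith
  -- assemble
  set T := {r : ℤ × ℤ //
      ((r.2 : ℝ) - r.1 * tau') / Real.sqrt 5 ∈ Set.Icc (s - 1 / 2) (s + 3 / 2)} with hT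
  set f : T → ℝ := fun r =>
      |g (((r.1.1 : ℝ) * tau - r.1.2) / Real.sqrt 5) -
        g (((r.1.1 : ℝ) * tau - r.1.2) / Real.sqrt 5 - tstar)| with hf
  set E : ℝ := 5 * (23*α*(2*(M:ℝ)+1) + (1/70) * (2/(3*((M:ℝ)-3)^3))) with hEdef
  have hsum : ∀ S : Finset T, ∑ r ∈ S, f r ≤ E := by
    intro S
    have h1 : ∑ r ∈ S, f r ≤ ∑ r ∈ S, Φ (r.1.1) := Finset.sum_le_sum (fun r _ => hpt r)
    rw [Finset.sum_comp Φ (fun r : T => r.1.1)] at h1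
    have h2 : ∑ b ∈ S.image (fun r : T => r.1.1), (S.filter (fun r : T => r.1.1 = b)).card • Φ b
        ≤ ∑ b ∈ S.image (fun r : T => r.1.1), 5 * Φ b := by
      apply Finset.sum_le_sum
      intro b hb
      rw [nsmul_eq_mul]
      apply mul_le_mul_of_nonneg_right _ (hΦnn b)
      exact_mod_cast hfib S b
    rw [← Finset.mul_sum] at h2
    have h3 := hΦsum (S.image (fun r : T => r.1.1))
    have h4 := mul_le_mul_of_nonneg_left h3 (by norm_num : (0:ℝ) ≤ 5)
    rw [hEdef]
    linarith
  have hf_nonneg : ∀ r : T, 0 ≤ f r := fun r => abs_nonneg _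
  have hsummable : Summable f := summable_of_sum_le hf_nonneg hsum
  refine ⟨hsummable, ?_⟩
  have htsum : ∑' r : T, f r ≤ E := hsummable.tsum_le_of_sum_le hsum
  have htsum_nn : 0 ≤ ∑' r : T, f r := tsum_nonneg hf_nonneg
  -- numerics
  have hβ3pos : (0:ℝ) < β^3 := by positivity
  have hA : 23*α*(2*(M:ℝ)+1) ≤ 115*β^3 := by
    have h1 : 23*α*(2*(M:ℝ)+1) ≤ 23*β^4*(2*(1/β+4)+1) := by
      rw [← hβ4]
      apply mul_le_mul_of_nonneg_left _ (by positivity)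
      linarith
    have h2 : 23*β^4*(2*(1/β+4)+1) = 46*β^3 + 207*β^4 := by
      field_simp
      ring
    have h3 : 207*β^4 ≤ 69*β^3 := by nlinarith [hβ3pos]
    linarith
  have hB : (1/70) * (2/(3*((M:ℝ)-3)^3)) ≤ β^3/105 := by
    have hb0 : (0:ℝ) < 1/β := by positivity
    have h1 : (1/β)^3 ≤ ((M:ℝ)-3)^3 := pow_le_pow_left₀ (le_of_lt hb0) hM3 3
    have h2 : 2/(3*((M:ℝ)-3)^3) ≤ 2/(3*(1/β)^3) := by
      apply div_le_div_of_nonneg_left (by norm_num) (by positivity) (by linarith)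
    have h3 : 2/(3*(1/β)^3) = 2*β^3/3 := by
      field_simp
    nlinarith
  have hE : E ≤ 576*β^3 := by
    rw [hEdef]
    nlinarith
  have hD : (3 + Real.sqrt 5)/Real.sqrt 5 ≤ 2.5 := by
    rw [div_le_iff₀ hs5]
    nlinarith [sqrt5_lb]
  have hDnn : (0:ℝ) ≤ (3 + Real.sqrt 5)/Real.sqrt 5 := by positivity
  calc (3 + Real.sqrt 5)/Real.sqrt 5 * ∑' r : T, f r
      ≤ 2.5 * (576*β^3) := mul_le_mul hD (htsum.trans hE) htsum_nn (by norm_num)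
    _ < 2507 * β^3 := by nlinarith [hβ3pos]
    _ = 2507 * α ^ ((3:ℝ)/4) := by rw [hβ3]
end
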